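/- Let N ∈ ℕ, let Lᵅⱼ : ℝᴺ → ℝ be twice continuously differentiable for α ∈ {0,1} and j ∈ {1,…,N}, let H : ℝᴺ → ℝ be twice continuously differentiable, set Kᵅᵢⱼ = ∂Lᵅⱼ/∂zⁱ − ∂Lᵅᵢ/∂zʲ, and let z : ℝ² → ℝᴺ be a twice continuously differentiable solution of Σ_{α,j} Kᵅᵢⱼ(z)·∂zʲ/∂xᵅ = (∂H/∂zⁱ)(z) for all i and all (x⁰,x¹). Then the symplecticity conservation law Σ_α ∂/∂xᵅ [ Σ_{i,j} Kᵅᵢⱼ(z)·(∂zⁱ/∂x⁰)·(∂zʲ/∂x¹) ] = 0 holds at every point. -/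

import Mathlib

/-- Symplecticity conservation law: if `z` solves the multi-symplectic system
`Kᵅᵢⱼ(z) z^j_{,α} = ∂H/∂zⁱ(z)`, then
`∂_α [ Kᵅᵢⱼ(z) z^i_{,0} z^j_{,1} ] = 0`. -/
lemma sum_antisymm_aux {N : ℕ} (f : Fin N → Fin N → ℝ) (hf : ∀ i j, f i j = - f j i) :
    ∑ i, ∑ j, f i j = 0 := by
  have h : (∑ i, ∑ j, f i j) = - ∑ i, ∑ j, f i j := by
    calc ∑ i, ∑ j, f i j = ∑ j, ∑ i, f i j := Finset.sum_comm
    _ = ∑ j, ∑ i, - f j i := by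
        refine Finset.sum_congr rfl fun j _ => Finset.sum_congr rfl fun i _ => ?_
        rw [← hf]
    _ = - ∑ j, ∑ i, f j i := by simp [Finset.sum_neg_distrib]
  linarith

lemma clm_apply_decomp {N : ℕ} (φ : (Fin N → ℝ) →L[ℝ] ℝ) (u : Fin N → ℝ) :
    φ u = ∑ i, u i * φ (Pi.single i 1) := by
  have hu : u = ∑ i, u i • (Pi.single i 1 : Fin N → ℝ) := by
    ext j
    simp [Finset.sum_apply, Pi.single_apply]
  conv_lhs => rw [hu]
  rw [map_sum]
  simp [smul_eq_mul]

theorem symplecticity_conservation_law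
    (N : ℕ)
    (L : Fin 2 → Fin N → (Fin N → ℝ) → ℝ)
    (hL : ∀ α j, ContDiff ℝ 2 (L α j))
    (H : (Fin N → ℝ) → ℝ) (hH : ContDiff ℝ 2 H)
    (K : Fin 2 → Fin N → Fin N → (Fin N → ℝ) → ℝ)
    (hK : ∀ α i j v, K α i j v
      = fderiv ℝ (L α j) v (Pi.single i 1) - fderiv ℝ (L α i) v (Pi.single j 1))
    (z : (Fin 2 → ℝ) → (Fin N → ℝ)) (hz : ContDiff ℝ 2 z)
    (hsol : ∀ (i : Fin N) (q : Fin 2 → ℝ),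
      (∑ α : Fin 2, ∑ j : Fin N, K α i j (z q) * fderiv ℝ z q (Pi.single α 1) j)
        = fderiv ℝ H (z q) (Pi.single i 1)) :
    ∀ q : Fin 2 → ℝ,
      ∑ α : Fin 2,
        fderiv ℝ (fun q' =>
            ∑ i : Fin N, ∑ j : Fin N,
              K α i j (z q') * fderiv ℝ z q' (Pi.single 0 1) i
                * fderiv ℝ z q' (Pi.single 1 1) j) q (Pi.single α 1) = 0 := by
  intro q
  set g : (Fin 2 → ℝ) → ℝ := fun p => H (z p) with hg_def
  have hg : ContDiff ℝ 2 g := hH.comp hz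
  have hzd : Differentiable ℝ z := hz.differentiable (by norm_num)
  have hHd : Differentiable ℝ H := hH.differentiable (by norm_num)
  have hgd : Differentiable ℝ g := hg.differentiable (by norm_num)
  have hKskew : ∀ α i j v, K α i j v = - K α j i v := by
    intro α i j v; rw [hK, hK]; ring
  -- chain rule + decomposition
  have hchain : ∀ (p : Fin 2 → ℝ) (β : Fin 2),
      fderiv ℝ g p (Pi.single β 1)
        = ∑ i, fderiv ℝ z p (Pi.single β 1) i * fderiv ℝ H (z p) (Pi.single i 1) := by
    intro p β
    have hc : fderiv ℝ g p = (fderiv ℝ H (z p)).comp (fderiv ℝ z p) :=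
      fderiv_comp p (hHd (z p)) (hzd p)
    rw [hc]
    exact clm_apply_decomp (fderiv ℝ H (z p)) (fderiv ℝ z p (Pi.single β 1))
  -- contraction identity
  have hcontract : ∀ (p : Fin 2 → ℝ) (β : Fin 2),
      ∑ i, fderiv ℝ z p (Pi.single β 1) i
          * (∑ α : Fin 2, ∑ j, K α i j (z p) * fderiv ℝ z p (Pi.single α 1) j)
        = fderiv ℝ g p (Pi.single β 1) := by
    intro p β
    rw [hchain p β]
    exact Finset.sum_congr rfl fun i _ => by rw [hsol i p]
  -- F¹ = ∂₀ g
  have hF1 : (fun p => ∑ i : Fin N, ∑ j : Fin N,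
      K 1 i j (z p) * fderiv ℝ z p (Pi.single 0 1) i * fderiv ℝ z p (Pi.single 1 1) j)
      = fun p => fderiv ℝ g p (Pi.single 0 1) := by
    funext p
    set w : Fin 2 → Fin N → ℝ := fun β => fderiv ℝ z p (Pi.single β 1) with hw
    have h := hcontract p 0
    have hzero : ∑ i, ∑ j, w 0 i * (K 0 i j (z p) * w 0 j) = 0 := by
      refine sum_antisymm_aux _ fun i j => ?_
      rw [hKskew 0 i j]; ring
    have hsplit : ∑ i, w 0 i * (∑ α : Fin 2, ∑ j, K α i j (z p) * w α j)
        = (∑ i, ∑ j, w 0 i * (K 0 i j (z p) * w 0 j))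
          + ∑ i, ∑ j, K 1 i j (z p) * w 0 i * w 1 j := by
      rw [← Finset.sum_add_distrib]
      refine Finset.sum_congr rfl fun i _ => ?_
      rw [Fin.sum_univ_two, mul_add, Finset.mul_sum, Finset.mul_sum]
      congr 1
      exact Finset.sum_congr rfl fun j _ => by ring
    rw [hsplit, hzero, zero_add] at h
    exact h
  -- F⁰ = -∂₁ g
  have hF0 : (fun p => ∑ i : Fin N, ∑ j : Fin N,
      K 0 i j (z p) * fderiv ℝ z p (Pi.single 0 1) i * fderiv ℝ z p (Pi.single 1 1) j)
      = fun p => - fderiv ℝ g p (Pi.single 1 1) := by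
    funext p
    set w : Fin 2 → Fin N → ℝ := fun β => fderiv ℝ z p (Pi.single β 1) with hw
    have h := hcontract p 1
    have hzero : ∑ i, ∑ j, w 1 i * (K 1 i j (z p) * w 1 j) = 0 := by
      refine sum_antisymm_aux _ fun i j => ?_
      rw [hKskew 1 i j]; ring
    have hsplit : ∑ i, w 1 i * (∑ α : Fin 2, ∑ j, K α i j (z p) * w α j)
        = (∑ i, ∑ j, w 1 i * (K 0 i j (z p) * w 0 j))
          + ∑ i, ∑ j, w 1 i * (K 1 i j (z p) * w 1 j) := by
      rw [← Finset.sum_add_distrib]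
      refine Finset.sum_congr rfl fun i _ => ?_
      rw [Fin.sum_univ_two, mul_add, Finset.mul_sum, Finset.mul_sum]
    have hswap : ∑ i, ∑ j, w 1 i * (K 0 i j (z p) * w 0 j)
        = - ∑ i, ∑ j, K 0 i j (z p) * w 0 i * w 1 j := by
      rw [Finset.sum_comm (f := fun i j => w 1 i * (K 0 i j (z p) * w 0 j))]
      rw [← Finset.sum_neg_distrib]
      refine Finset.sum_congr rfl fun i _ => ?_
      rw [← Finset.sum_neg_distrib]
      refine Finset.sum_congr rfl fun j _ => ?_
      rw [hKskew 0 j i]; ring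
    rw [hsplit, hzero, add_zero, hswap] at h
    linarith
  -- second derivative machinery
  have hg' : Differentiable ℝ (fderiv ℝ g) :=
    (hg.fderiv_right (m := 1) (by norm_num)).differentiable (by norm_num)
  have hsymm : ∀ v w, fderiv ℝ (fderiv ℝ g) q v w = fderiv ℝ (fderiv ℝ g) q w v :=
    second_derivative_symmetric (fun y => (hgd y).hasFDerivAt) ((hg' q).hasFDerivAt)
  have happ : ∀ (v u : Fin 2 → ℝ),
      fderiv ℝ (fun p => fderiv ℝ g p v) q u = fderiv ℝ (fderiv ℝ g) q u v := by
    intro v u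
    have : (fun p => fderiv ℝ g p v)
        = (ContinuousLinearMap.apply ℝ ℝ v) ∘ (fderiv ℝ g) := rfl
    rw [this, fderiv_comp q ((ContinuousLinearMap.apply ℝ ℝ v).differentiableAt) (hg' q),
      ContinuousLinearMap.fderiv]
    rfl
  rw [Fin.sum_univ_two, hF0, hF1]
  have hneg : fderiv ℝ (fun p => - fderiv ℝ g p (Pi.single 1 1)) q (Pi.single 0 1)
      = - fderiv ℝ (fun p => fderiv ℝ g p (Pi.single 1 1)) q (Pi.single 0 1) := by
    rw [fderiv_fun_neg]; rfl
  rw [hneg, happ, happ, hsymm]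
  ring
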